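/- For every k ≥ 2, there exist λ, μ ∈ ℤ^{2k+1} such that the Gelfand–Tsetlin polytope GT(λ,μ) has a vertex some of whose coordinates are rational numbers with denominator exactly k. In particular, for every n ≥ 5 there exists a GT-polytope in X_n with a non-integral vertex, disproving the Berenstein–Kirillov conjecture. -/

import Mathlib

/-- Valid index positions of a triangular array of size `n`. -/
abbrev IdxP (n i j : ℕ) : Prop := 1 ≤ i ∧ i ≤ j ∧ j ≤ n

/-- A Gelfand--Tsetlin pattern of size `n` (entries outside the triangle are ignored). -/
def IsGTPattern (n : ℕ) (x : ℕ → ℕ → ℝ) : Prop :=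
  (∀ i j, IdxP n i j → 0 ≤ x i j) ∧
  (∀ i j, 1 ≤ i → i ≤ j → j + 1 ≤ n → x i (j + 1) ≥ x i j ∧ x i j ≥ x (i + 1) (j + 1))

/-- Membership in the Gelfand--Tsetlin polytope `GT(λ,μ)`: a GT-pattern, vanishing outside the
triangle, with top row `λ` and `j`-th row sum `μ₁ + ⋯ + μⱼ`. -/
def GTMem (n : ℕ) (lam mu : ℕ → ℤ) (x : ℕ → ℕ → ℝ) : Prop :=
  IsGTPattern n x ∧
  (∀ i j, ¬ IdxP n i j → x i j = 0) ∧
  (∀ i, 1 ≤ i → i ≤ n → x i n = (lam i : ℝ)) ∧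
  (∀ j, 1 ≤ j → j ≤ n → ∑ i ∈ Finset.Icc 1 j, x i j = ∑ t ∈ Finset.Icc 1 j, (mu t : ℝ))

namespace GTV

def lamF (k : ℕ) : ℕ → ℤ := fun i => if i ≤ k then (k:ℤ) else if i = k+1 then (k:ℤ)-1 else 0
def muF (k : ℕ) : ℕ → ℤ := fun t => if t ≤ k+1 then (k:ℤ)-1 else if t ≤ 2*k+1 then 1 else 0

noncomputable def aV (k : ℕ) : ℝ := ((k:ℝ)^2 - 1)/k

/-- the candidate vertex -/
noncomputable def pat (k n : ℕ) : ℕ → ℕ → ℝ := fun i j =>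
  if 1 ≤ i ∧ i ≤ j ∧ j ≤ n then
    if 2*k+1 ≤ j then (if i ≤ k then (k:ℝ) else if i = k+1 then (k:ℝ)-1 else 0)
    else if j ≤ k+1 then (if i + 1 ≤ j then aV k else ((k:ℝ)-1)*((k:ℝ)+1-(j:ℝ))/k)
    else if i + k + 1 ≤ j then (k:ℝ)
    else if i ≤ k then aV k
    else if i = k+1 then ((k:ℝ)-1)*((j:ℝ)-((k:ℝ)+1))/k
    else 0
  else 0

section eval
variable {k n i j : ℕ}

lemma pat_out (h : ¬ IdxP n i j) : pat k n i j = 0 := by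
  simp only [pat, IdxP] at *; rw [if_neg h]

lemma pat_top_k (h : IdxP n i j) (hj : 2*k+1 ≤ j) (hi : i ≤ k) : pat k n i j = k := by
  simp only [pat]; rw [if_pos h]; split_ifs <;> first | rfl | omega

lemma pat_top_e (h : IdxP n i j) (hj : 2*k+1 ≤ j) (hi : i = k+1) : pat k n i j = (k:ℝ)-1 := by
  simp only [pat]; rw [if_pos h]; split_ifs <;> first | rfl | omega

lemma pat_top_0 (h : IdxP n i j) (hj : 2*k+1 ≤ j) (hi : k+2 ≤ i) : pat k n i j = 0 := by
  simp only [pat]; rw [if_pos h]; split_ifs <;> first | rfl | omega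

lemma pat_lo_a (hk : 1 ≤ k) (h : IdxP n i j) (hj : j ≤ k+1) (hi : i + 1 ≤ j) : pat k n i j = aV k := by
  simp only [pat]; rw [if_pos h]; split_ifs <;> first | rfl | omega

lemma pat_lo_v (hk : 1 ≤ k) (h : IdxP n i j) (hj : j ≤ k+1) (hi : i = j) :
    pat k n i j = ((k:ℝ)-1)*((k:ℝ)+1-(j:ℝ))/k := by
  simp only [pat]; rw [if_pos h]; split_ifs <;> first | rfl | omega

lemma pat_mid_k (h : IdxP n i j) (hj1 : k+2 ≤ j) (hj2 : j ≤ 2*k) (hi : i + k + 1 ≤ j) :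
    pat k n i j = k := by
  simp only [pat]; rw [if_pos h]; split_ifs <;> first | rfl | omega

lemma pat_mid_a (h : IdxP n i j) (hj1 : k+2 ≤ j) (hj2 : j ≤ 2*k) (hi1 : j ≤ i + k) (hi2 : i ≤ k) :
    pat k n i j = aV k := by
  simp only [pat]; rw [if_pos h]; split_ifs <;> first | rfl | omega

lemma pat_mid_w (h : IdxP n i j) (hj1 : k+2 ≤ j) (hj2 : j ≤ 2*k) (hi : i = k+1) :
    pat k n i j = ((k:ℝ)-1)*((j:ℝ)-((k:ℝ)+1))/k := by
  simp only [pat]; rw [if_pos h]; split_ifs <;> first | rfl | omega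

lemma pat_mid_0 (h : IdxP n i j) (hj1 : k+2 ≤ j) (hj2 : j ≤ 2*k) (hi : k+2 ≤ i) :
    pat k n i j = 0 := by
  simp only [pat]; rw [if_pos h]; split_ifs <;> first | rfl | omega

end eval

lemma sum_Ioc_const (f : ℕ → ℝ) {a b : ℕ} (c : ℝ) (h : ∀ i ∈ Finset.Ioc a b, f i = c) :
    ∑ i ∈ Finset.Ioc a b, f i = ((b - a : ℕ):ℝ) * c := by
  rw [Finset.sum_congr rfl h, Finset.sum_const, Nat.card_Ioc, nsmul_eq_mul]

lemma Ioc_single (a : ℕ) : Finset.Ioc a (a+1) = {a+1} := by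
  ext t; simp [Nat.lt_succ_iff]

lemma sum_single (f : ℕ → ℝ) {a b : ℕ} (h : b = a + 1) : ∑ i ∈ Finset.Ioc a b, f i = f b := by
  subst h; rw [Ioc_single, Finset.sum_singleton]

lemma split3 (f : ℕ → ℝ) {a b c : ℕ} (h1 : a ≤ b) (h2 : b ≤ c) :
    ∑ i ∈ Finset.Ioc 0 c, f i
      = (∑ i ∈ Finset.Ioc 0 a, f i) + (∑ i ∈ Finset.Ioc a b, f i) + ∑ i ∈ Finset.Ioc b c, f i := by
  rw [Finset.sum_Ioc_consecutive f (Nat.zero_le a) h1,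
      Finset.sum_Ioc_consecutive f (Nat.zero_le b) h2]

lemma split4 (f : ℕ → ℝ) {a b c d : ℕ} (h1 : a ≤ b) (h2 : b ≤ c) (h3 : c ≤ d) :
    ∑ i ∈ Finset.Ioc 0 d, f i
      = ((∑ i ∈ Finset.Ioc 0 a, f i) + (∑ i ∈ Finset.Ioc a b, f i))
        + (∑ i ∈ Finset.Ioc b c, f i) + ∑ i ∈ Finset.Ioc c d, f i := by
  rw [Finset.sum_Ioc_consecutive f (Nat.zero_le a) h1]
  rw [Finset.sum_Ioc_consecutive f (le_trans (Nat.zero_le a) h1) h2,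
      Finset.sum_Ioc_consecutive f (le_trans (le_trans (Nat.zero_le a) h1) h2) h3]

lemma icc_ioc (j : ℕ) : Finset.Icc 1 j = Finset.Ioc 0 j := by rw [← Finset.Icc_add_one_left_eq_Ioc]; rfl

section sums
variable {k n j : ℕ}

lemma kR_pos (hk : 1 ≤ k) : (0:ℝ) < k := by exact_mod_cast Nat.pos_of_ne_zero (by omega)

lemma sum_mu_lo (hj : j ≤ k+1) :
    ∑ t ∈ Finset.Icc 1 j, ((muF k t : ℤ):ℝ) = (j:ℝ)*((k:ℝ)-1) := by
  rw [icc_ioc]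
  rw [sum_Ioc_const _ ((k:ℝ)-1) (fun t ht => by
    simp only [Finset.mem_Ioc] at ht
    simp only [muF, if_pos (by omega : t ≤ k+1)]; push_cast; ring)]
  simp only [Nat.sub_zero]; try (push_cast; ring)

lemma sum_mu_mid (hj1 : k+1 ≤ j) (hj2 : j ≤ 2*k+1) :
    ∑ t ∈ Finset.Icc 1 j, ((muF k t : ℤ):ℝ) = ((k:ℝ)+1)*((k:ℝ)-1) + ((j:ℝ) - ((k:ℝ)+1)) := by
  rw [icc_ioc, ← Finset.sum_Ioc_consecutive _ (Nat.zero_le (k+1)) hj1]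
  rw [sum_Ioc_const _ ((k:ℝ)-1) (fun t ht => by
    simp only [Finset.mem_Ioc] at ht
    simp only [muF, if_pos (by omega : t ≤ k+1)]; push_cast; ring)]
  rw [sum_Ioc_const _ 1 (fun t ht => by
    simp only [Finset.mem_Ioc] at ht
    simp only [muF, if_neg (by omega : ¬ t ≤ k+1), if_pos (by omega : t ≤ 2*k+1)]; push_cast; ring)]
  have h1 : ((k+1-0 : ℕ):ℝ) = (k:ℝ)+1 := by simp only [Nat.sub_zero]; try (push_cast; ring)
  have h2 : ((j-(k+1) : ℕ):ℝ) = (j:ℝ)-((k:ℝ)+1) := by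
    rw [Nat.cast_sub hj1]; push_cast; ring
  rw [h1, h2]; ring

lemma sum_mu_top (hj : 2*k+1 ≤ j) :
    ∑ t ∈ Finset.Icc 1 j, ((muF k t : ℤ):ℝ) = ((k:ℝ)+1)*((k:ℝ)-1) + (k:ℝ) := by
  rw [icc_ioc, split3 _ (by omega : k+1 ≤ 2*k+1) hj]
  rw [sum_Ioc_const _ ((k:ℝ)-1) (fun t ht => by
    simp only [Finset.mem_Ioc] at ht
    simp only [muF, if_pos (by omega : t ≤ k+1)]; push_cast; ring)]
  rw [sum_Ioc_const _ 1 (fun t ht => by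
    simp only [Finset.mem_Ioc] at ht
    simp only [muF, if_neg (by omega : ¬ t ≤ k+1), if_pos (by omega : t ≤ 2*k+1)]; push_cast; ring)]
  rw [sum_Ioc_const _ 0 (fun t ht => by
    simp only [Finset.mem_Ioc] at ht
    simp only [muF, if_neg (by omega : ¬ t ≤ k+1), if_neg (by omega : ¬ t ≤ 2*k+1)]; push_cast; ring)]
  have h1 : ((k+1-0 : ℕ):ℝ) = (k:ℝ)+1 := by simp only [Nat.sub_zero]; try (push_cast; ring)
  have h2 : ((2*k+1-(k+1) : ℕ):ℝ) = (k:ℝ) := by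
    have : 2*k+1-(k+1) = k := by omega
    rw [this]
  rw [h1, h2]; ring

lemma sum_lam (hj : k+1 ≤ j) :
    ∑ i ∈ Finset.Icc 1 j, ((lamF k i : ℤ):ℝ) = ((k:ℝ)+1)*((k:ℝ)-1) + (k:ℝ) := by
  rw [icc_ioc, split3 _ (by omega : k ≤ k+1) hj]
  rw [sum_Ioc_const _ ((k:ℝ)) (fun t ht => by
    simp only [Finset.mem_Ioc] at ht
    simp only [lamF, if_pos (by omega : t ≤ k)]; push_cast; ring)]
  rw [sum_single _ rfl]
  rw [sum_Ioc_const _ 0 (fun t ht => by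
    simp only [Finset.mem_Ioc] at ht
    simp only [lamF, if_neg (by omega : ¬ t ≤ k), if_neg (by omega : ¬ t = k+1)]; push_cast; ring)]
  simp only [lamF, if_neg (by omega : ¬ k+1 ≤ k), if_pos rfl]
  simp only [Nat.sub_zero]; try (push_cast; ring)


end sums

section patsums
variable {k n j : ℕ}

lemma sum_pat_lo (hk : 1 ≤ k) (hj1 : 1 ≤ j) (hj : j ≤ k+1) (hjn : j ≤ n) :
    ∑ i ∈ Finset.Icc 1 j, pat k n i j = (j:ℝ)*((k:ℝ)-1) := by
  have hk0 : (0:ℝ) < k := kR_pos hk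
  rw [icc_ioc, ← Finset.sum_Ioc_consecutive _ (Nat.zero_le (j-1)) (by omega : j-1 ≤ j)]
  rw [sum_Ioc_const _ (aV k) (fun i hi => by
    simp only [Finset.mem_Ioc] at hi
    exact pat_lo_a hk ⟨by omega, by omega, hjn⟩ hj (by omega))]
  rw [sum_single _ (by omega : j = (j-1) + 1)]
  rw [pat_lo_v hk ⟨by omega, le_refl j, hjn⟩ hj rfl]
  have h1 : ((j-1-0 : ℕ):ℝ) = (j:ℝ)-1 := by
    simp only [Nat.sub_zero]; rw [Nat.cast_sub hj1]; push_cast; ring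
  rw [h1, aV]
  field_simp
  ring

lemma sum_pat_mid (hk : 1 ≤ k) (hj1 : k+2 ≤ j) (hj2 : j ≤ 2*k) (hjn : j ≤ n) :
    ∑ i ∈ Finset.Icc 1 j, pat k n i j = ((k:ℝ)+1)*((k:ℝ)-1) + ((j:ℝ) - ((k:ℝ)+1)) := by
  have hk0 : (0:ℝ) < k := kR_pos hk
  rw [icc_ioc, split4 _ (by omega : j-(k+1) ≤ k) (by omega : k ≤ k+1) (by omega : k+1 ≤ j)]
  rw [sum_Ioc_const _ ((k:ℝ)) (fun i hi => by
    simp only [Finset.mem_Ioc] at hi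
    exact pat_mid_k ⟨by omega, by omega, hjn⟩ hj1 hj2 (by omega))]
  rw [sum_Ioc_const _ (aV k) (fun i hi => by
    simp only [Finset.mem_Ioc] at hi
    exact pat_mid_a ⟨by omega, by omega, hjn⟩ hj1 hj2 (by omega) (by omega))]
  rw [sum_single _ rfl]
  rw [pat_mid_w ⟨by omega, by omega, hjn⟩ hj1 hj2 rfl]
  rw [sum_Ioc_const _ 0 (fun i hi => by
    simp only [Finset.mem_Ioc] at hi
    exact pat_mid_0 ⟨by omega, by omega, hjn⟩ hj1 hj2 (by omega))]
  have h1 : ((j-(k+1)-0 : ℕ):ℝ) = (j:ℝ)-((k:ℝ)+1) := by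
    simp only [Nat.sub_zero]; rw [Nat.cast_sub (by omega)]; push_cast; ring
  have h2 : ((k-(j-(k+1)) : ℕ):ℝ) = (k:ℝ)-((j:ℝ)-((k:ℝ)+1)) := by
    rw [Nat.cast_sub (by omega), Nat.cast_sub (by omega)]; push_cast; ring
  rw [h1, h2, aV]
  field_simp
  ring

lemma sum_pat_top (hk : 1 ≤ k) (hj : 2*k+1 ≤ j) (hjn : j ≤ n) :
    ∑ i ∈ Finset.Icc 1 j, pat k n i j = ((k:ℝ)+1)*((k:ℝ)-1) + (k:ℝ) := by
  rw [icc_ioc, split3 _ (by omega : k ≤ k+1) (by omega : k+1 ≤ j)]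
  rw [sum_Ioc_const _ ((k:ℝ)) (fun i hi => by
    simp only [Finset.mem_Ioc] at hi
    exact pat_top_k ⟨by omega, by omega, hjn⟩ hj (by omega))]
  rw [sum_single _ rfl]
  rw [pat_top_e ⟨by omega, by omega, hjn⟩ hj rfl]
  rw [sum_Ioc_const _ 0 (fun i hi => by
    simp only [Finset.mem_Ioc] at hi
    exact pat_top_0 ⟨by omega, by omega, hjn⟩ hj (by omega))]
  simp only [Nat.sub_zero]
  push_cast
  ring

end patsums

section ineq
variable {k : ℕ}

lemma aV_nonneg (hk : 1 ≤ k) : 0 ≤ aV k := by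
  have hk0 : (0:ℝ) < k := kR_pos hk
  have hkR : (1:ℝ) ≤ k := by exact_mod_cast hk
  unfold aV; apply div_nonneg _ hk0.le; nlinarith

lemma aV_le_k (hk : 1 ≤ k) : aV k ≤ k := by
  have hk0 : (0:ℝ) < k := kR_pos hk
  rw [aV, div_le_iff₀ hk0]; nlinarith

lemma k_sub_one_le_aV (hk : 1 ≤ k) : (k:ℝ) - 1 ≤ aV k := by
  have hk0 : (0:ℝ) < k := kR_pos hk
  have hkR : (1:ℝ) ≤ k := by exact_mod_cast hk
  rw [aV, le_div_iff₀ hk0]; nlinarith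

lemma v_le_aV (hk : 1 ≤ k) {r : ℝ} (hr : 0 ≤ r) : ((k:ℝ)-1)*((k:ℝ)+1-r)/k ≤ aV k := by
  have hk0 : (0:ℝ) < k := kR_pos hk
  have hkR : (1:ℝ) ≤ k := by exact_mod_cast hk
  rw [aV, div_le_div_iff₀ hk0 hk0]
  nlinarith [mul_nonneg (mul_nonneg (sub_nonneg.mpr hkR) hk0.le) hr]

lemma w_le_aV (hk : 1 ≤ k) {r : ℝ} (hr : r ≤ 2*(k:ℝ)+2) : ((k:ℝ)-1)*(r-((k:ℝ)+1))/k ≤ aV k := by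
  have hk0 : (0:ℝ) < k := kR_pos hk
  have hkR : (1:ℝ) ≤ k := by exact_mod_cast hk
  rw [aV, div_le_div_iff₀ hk0 hk0]
  nlinarith [mul_nonneg (mul_nonneg (sub_nonneg.mpr hkR) hk0.le)
    (by linarith : (0:ℝ) ≤ 2*(k:ℝ)+2-r)]

lemma v_nonneg (hk : 1 ≤ k) {r : ℝ} (hr : r ≤ (k:ℝ)+1) : 0 ≤ ((k:ℝ)-1)*((k:ℝ)+1-r)/k := by
  have hk0 : (0:ℝ) < k := kR_pos hk
  have hkR : (1:ℝ) ≤ k := by exact_mod_cast hk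
  apply div_nonneg _ (le_of_lt hk0); nlinarith

lemma w_nonneg (hk : 1 ≤ k) {r : ℝ} (hr : (k:ℝ)+1 ≤ r) : 0 ≤ ((k:ℝ)-1)*(r-((k:ℝ)+1))/k := by
  have hk0 : (0:ℝ) < k := kR_pos hk
  have hkR : (1:ℝ) ≤ k := by exact_mod_cast hk
  apply div_nonneg _ (le_of_lt hk0); nlinarith

lemma w_le_k_sub_one (hk : 1 ≤ k) {r : ℝ} (hr : r ≤ 2*(k:ℝ)) :
    ((k:ℝ)-1)*(r-((k:ℝ)+1))/k ≤ (k:ℝ) - 1 := by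
  have hk0 : (0:ℝ) < k := kR_pos hk
  have hkR : (1:ℝ) ≤ k := by exact_mod_cast hk
  rw [div_le_iff₀ hk0]; nlinarith

lemma v_mono (hk : 1 ≤ k) {r s : ℝ} (hrs : r ≤ s) :
    ((k:ℝ)-1)*((k:ℝ)+1-s)/k ≤ ((k:ℝ)-1)*((k:ℝ)+1-r)/k := by
  have hk0 : (0:ℝ) < k := kR_pos hk
  have hkR : (1:ℝ) ≤ k := by exact_mod_cast hk
  rw [div_le_div_iff₀ hk0 hk0]
  nlinarith [mul_nonneg (mul_nonneg (sub_nonneg.mpr hkR) hk0.le) (sub_nonneg.mpr hrs)]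

lemma w_mono (hk : 1 ≤ k) {r s : ℝ} (hrs : r ≤ s) :
    ((k:ℝ)-1)*(r-((k:ℝ)+1))/k ≤ ((k:ℝ)-1)*(s-((k:ℝ)+1))/k := by
  have hk0 : (0:ℝ) < k := kR_pos hk
  have hkR : (1:ℝ) ≤ k := by exact_mod_cast hk
  rw [div_le_div_iff₀ hk0 hk0]
  nlinarith [mul_nonneg (mul_nonneg (sub_nonneg.mpr hkR) hk0.le) (sub_nonneg.mpr hrs)]

end ineq

section member
variable {k n : ℕ}

lemma pat_nonneg (hk : 2 ≤ k) (hn : 2*k+1 ≤ n) :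
    ∀ i j, IdxP n i j → 0 ≤ pat k n i j := by
  intro i j h
  obtain ⟨hi, hij, hjn⟩ := h
  have hk1 : 1 ≤ k := by omega
  have hk0 : (0:ℝ) < k := kR_pos hk1
  have hkR : (1:ℝ) ≤ k := by exact_mod_cast hk1
  by_cases h1 : 2*k+1 ≤ j
  · rcases (by omega : i ≤ k ∨ i = k+1 ∨ k+2 ≤ i) with h2 | h2 | h2
    · rw [pat_top_k ⟨hi, hij, hjn⟩ h1 h2]; positivity
    · rw [pat_top_e ⟨hi, hij, hjn⟩ h1 h2]; linarith
    · rw [pat_top_0 ⟨hi, hij, hjn⟩ h1 h2]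
  · by_cases h2 : j ≤ k+1
    · rcases (by omega : i + 1 ≤ j ∨ i = j) with h3 | h3
      · rw [pat_lo_a hk1 ⟨hi, hij, hjn⟩ h2 h3]; exact aV_nonneg hk1
      · rw [pat_lo_v hk1 ⟨hi, hij, hjn⟩ h2 h3]
        exact v_nonneg hk1 (by exact_mod_cast Nat.cast_le.mpr h2)
    · have hj1 : k+2 ≤ j := by omega
      have hj2 : j ≤ 2*k := by omega
      rcases (by omega : i+k+1 ≤ j ∨ (j ≤ i+k ∧ i ≤ k) ∨ i = k+1 ∨ k+2 ≤ i) with h3 | h3 | h3 | h3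
      · rw [pat_mid_k ⟨hi, hij, hjn⟩ hj1 hj2 h3]; positivity
      · rw [pat_mid_a ⟨hi, hij, hjn⟩ hj1 hj2 h3.1 h3.2]; exact aV_nonneg hk1
      · rw [pat_mid_w ⟨hi, hij, hjn⟩ hj1 hj2 h3]
        exact w_nonneg hk1 (by exact_mod_cast Nat.cast_le.mpr (by omega : k+1 ≤ j))
      · rw [pat_mid_0 ⟨hi, hij, hjn⟩ hj1 hj2 h3]

lemma pat_interlace (hk : 2 ≤ k) (hn : 2*k+1 ≤ n) :
    ∀ i j, 1 ≤ i → i ≤ j → j + 1 ≤ n →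
      pat k n i (j+1) ≥ pat k n i j ∧ pat k n i j ≥ pat k n (i+1) (j+1) := by
  intro i j hi hij hj1n
  have hk1 : 1 ≤ k := by omega
  have hk0 : (0:ℝ) < k := kR_pos hk1
  have hkR : (1:ℝ) ≤ k := by exact_mod_cast hk1
  have hkR2 : (2:ℝ) ≤ k := by exact_mod_cast hk
  have hjn : j ≤ n := by omega
  have P : IdxP n i j := ⟨hi, hij, hjn⟩
  have Pu : IdxP n i (j+1) := ⟨hi, by omega, hj1n⟩
  have Pl : IdxP n (i+1) (j+1) := ⟨by omega, by omega, hj1n⟩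
  -- cast facts
  have cj : ((j:ℝ)) ≤ 2*(k:ℝ) + 1 → True := fun _ => trivial
  rcases (by omega : j + 1 ≤ k+1 ∨ j = k+1 ∨ (k+2 ≤ j ∧ j+1 ≤ 2*k) ∨ j = 2*k ∨ 2*k+1 ≤ j)
    with hA | hB | hC | hD | hE
  · -- both rows low type
    rcases (by omega : i + 1 ≤ j ∨ i = j) with h3 | h3
    · rw [pat_lo_a hk1 P (by omega) h3, pat_lo_a hk1 Pu (by omega) (by omega),
          pat_lo_a hk1 Pl (by omega) (by omega)]
      exact ⟨le_refl _, le_refl _⟩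
    · rw [pat_lo_v hk1 P (by omega) h3, pat_lo_a hk1 Pu (by omega) (by omega),
          pat_lo_v hk1 Pl (by omega) (by omega)]
      constructor
      · exact v_le_aV hk1 (by positivity)
      · apply v_mono hk1; push_cast; linarith
  · -- j = k+1, j+1 = k+2 mid type
    subst hB
    have hj1 : k+2 ≤ k+1+1 := by omega
    have hj2 : k+1+1 ≤ 2*k := by omega
    rcases (by omega : i = 1 ∨ (2 ≤ i ∧ i ≤ k-1) ∨ i = k ∨ i = k+1) with h3 | h3 | h3 | h3
    · rw [pat_lo_a hk1 P (by omega) (by omega), pat_mid_k Pu hj1 hj2 (by omega),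
          pat_mid_a Pl hj1 hj2 (by omega) (by omega)]
      exact ⟨aV_le_k hk1, le_refl _⟩
    · rw [pat_lo_a hk1 P (by omega) (by omega), pat_mid_a Pu hj1 hj2 (by omega) (by omega),
          pat_mid_a Pl hj1 hj2 (by omega) (by omega)]
      exact ⟨le_refl _, le_refl _⟩
    · subst h3
      rw [pat_lo_a hk1 P (by omega) (by omega), pat_mid_a Pu hj1 hj2 (by omega) (by omega),
          pat_mid_w Pl hj1 hj2 rfl]
      refine ⟨le_refl _, ?_⟩
      apply w_le_aV hk1; push_cast; linarith
    · subst h3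
      rw [pat_lo_v hk1 P (by omega) rfl, pat_mid_w Pu hj1 hj2 rfl,
          pat_mid_0 Pl hj1 hj2 (by omega)]
      constructor
      · have hv0 : ((k:ℝ)-1)*((k:ℝ)+1-((k+1:ℕ):ℝ))/k = 0 := by push_cast; ring
        rw [hv0]
        apply w_nonneg hk1; push_cast; linarith
      · have hv0 : ((k:ℝ)-1)*((k:ℝ)+1-((k+1:ℕ):ℝ))/k = 0 := by push_cast; ring
        rw [hv0]
  · -- both rows mid type
    obtain ⟨hj1, hj2⟩ := hC
    have c1 : (k:ℝ)+2 ≤ (j:ℝ) := by exact_mod_cast hj1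
    have c2 : (j:ℝ)+1 ≤ 2*(k:ℝ) := by exact_mod_cast hj2
    rcases (by omega : i+k+1 ≤ j ∨ i+k+1 = j+1 ∨ (j+1 ≤ i+k ∧ i ≤ k-1) ∨ i = k ∨ i = k+1 ∨ k+2 ≤ i)
      with h3 | h3 | h3 | h3 | h3 | h3
    · rw [pat_mid_k P hj1 (by omega) h3, pat_mid_k Pu (by omega) (by omega) (by omega),
          pat_mid_k Pl (by omega) (by omega) (by omega)]
      exact ⟨le_refl _, le_refl _⟩
    · rw [pat_mid_a P hj1 (by omega) (by omega) (by omega),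
          pat_mid_k Pu (by omega) (by omega) (by omega),
          pat_mid_a Pl (by omega) (by omega) (by omega) (by omega)]
      exact ⟨aV_le_k hk1, le_refl _⟩
    · rw [pat_mid_a P hj1 (by omega) (by omega) (by omega),
          pat_mid_a Pu (by omega) (by omega) (by omega) (by omega),
          pat_mid_a Pl (by omega) (by omega) (by omega) (by omega)]
      exact ⟨le_refl _, le_refl _⟩
    · subst h3
      rw [pat_mid_a P hj1 (by omega) (by omega) (by omega),
          pat_mid_a Pu (by omega) (by omega) (by omega) (by omega),
          pat_mid_w Pl (by omega) (by omega) rfl]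
      refine ⟨le_refl _, ?_⟩
      apply w_le_aV hk1; push_cast; linarith
    · subst h3
      rw [pat_mid_w P hj1 (by omega) rfl, pat_mid_w Pu (by omega) (by omega) rfl,
          pat_mid_0 Pl (by omega) (by omega) (by omega)]
      constructor
      · apply w_mono hk1; push_cast; linarith
      · apply w_nonneg hk1; push_cast; linarith
    · rw [pat_mid_0 P hj1 (by omega) h3, pat_mid_0 Pu (by omega) (by omega) (by omega),
          pat_mid_0 Pl (by omega) (by omega) (by omega)]
      exact ⟨le_refl _, le_refl _⟩
  · -- j = 2k, j+1 = 2k+1 top type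
    subst hD
    have hj1 : k+2 ≤ 2*k := by omega
    rcases (by omega : i ≤ k-1 ∨ i = k ∨ i = k+1 ∨ k+2 ≤ i) with h3 | h3 | h3 | h3
    · rw [pat_mid_k P hj1 (by omega) (by omega), pat_top_k Pu (by omega) (by omega),
          pat_top_k Pl (by omega) (by omega)]
      exact ⟨le_refl _, le_refl _⟩
    · subst h3
      rw [pat_mid_a P hj1 (by omega) (by omega) (by omega), pat_top_k Pu (by omega) (by omega),
          pat_top_e Pl (by omega) rfl]
      exact ⟨aV_le_k hk1, k_sub_one_le_aV hk1⟩
    · subst h3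
      rw [pat_mid_w P hj1 (by omega) rfl, pat_top_e Pu (by omega) rfl,
          pat_top_0 Pl (by omega) (by omega)]
      constructor
      · apply w_le_k_sub_one hk1; push_cast; linarith
      · apply w_nonneg hk1; push_cast; linarith
    · rw [pat_mid_0 P hj1 (by omega) h3, pat_top_0 Pu (by omega) (by omega),
          pat_top_0 Pl (by omega) (by omega)]
      exact ⟨le_refl _, le_refl _⟩
  · -- both top type
    rcases (by omega : i ≤ k-1 ∨ i = k ∨ i = k+1 ∨ k+2 ≤ i) with h3 | h3 | h3 | h3
    · rw [pat_top_k P hE (by omega), pat_top_k Pu (by omega) (by omega),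
          pat_top_k Pl (by omega) (by omega)]
      exact ⟨le_refl _, le_refl _⟩
    · subst h3
      rw [pat_top_k P hE (by omega), pat_top_k Pu (by omega) (by omega),
          pat_top_e Pl (by omega) rfl]
      exact ⟨le_refl _, by linarith⟩
    · subst h3
      rw [pat_top_e P hE rfl, pat_top_e Pu (by omega) rfl, pat_top_0 Pl (by omega) (by omega)]
      exact ⟨le_refl _, by linarith⟩
    · rw [pat_top_0 P hE h3, pat_top_0 Pu (by omega) (by omega),
          pat_top_0 Pl (by omega) (by omega)]
      exact ⟨le_refl _, le_refl _⟩

end member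

section member2
variable {k n : ℕ}

lemma pat_mem (hk : 2 ≤ k) (hn : 2*k+1 ≤ n) : GTMem n (lamF k) (muF k) (pat k n) := by
  have hk1 : 1 ≤ k := by omega
  refine ⟨⟨pat_nonneg hk hn, pat_interlace hk hn⟩, fun i j h => pat_out h, ?_, ?_⟩
  · intro i hi hin
    have hjn : 2*k+1 ≤ n := hn
    rcases (by omega : i ≤ k ∨ i = k+1 ∨ k+2 ≤ i) with h2 | h2 | h2
    · rw [pat_top_k ⟨hi, hin, le_refl n⟩ hjn h2]
      simp [lamF, h2]
    · rw [pat_top_e ⟨hi, hin, le_refl n⟩ hjn h2]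
      simp only [lamF, if_neg (by omega : ¬ i ≤ k), if_pos h2]
      push_cast; ring
    · rw [pat_top_0 ⟨hi, hin, le_refl n⟩ hjn h2]
      simp only [lamF, if_neg (by omega : ¬ i ≤ k), if_neg (by omega : ¬ i = k+1)]
      norm_num
  · intro j hj1 hjn
    rcases (by omega : j ≤ k+1 ∨ (k+2 ≤ j ∧ j ≤ 2*k) ∨ 2*k+1 ≤ j) with h2 | h2 | h2
    · rw [sum_pat_lo hk1 hj1 h2 hjn, sum_mu_lo h2]
    · rw [sum_pat_mid hk1 h2.1 h2.2 hjn, sum_mu_mid (by omega) (by omega)]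
    · rw [sum_pat_top hk1 h2 hjn, sum_mu_top h2]

/-- rows `≥ 2k+1` are forced to equal `lam` for every member of the polytope -/
lemma forced_top (hk : 2 ≤ k) (hn : 2*k+1 ≤ n) {y : ℕ → ℕ → ℝ}
    (hy : GTMem n (lamF k) (muF k) y) :
    ∀ j, 2*k+1 ≤ j → j ≤ n → ∀ i, 1 ≤ i → i ≤ j → y i j = ((lamF k i : ℤ):ℝ) := by
  obtain ⟨⟨hy0, hyi⟩, hyout, hytop, hysum⟩ := hy
  -- downward induction via fuel m = n - j
  suffices H : ∀ m j, j = n - m → 2*k+1 ≤ j → j ≤ n → ∀ i, 1 ≤ i → i ≤ j →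
      y i j = ((lamF k i : ℤ):ℝ) by
    intro j hj hjn i hi hij
    exact H (n - j) j (by omega) hj hjn i hi hij
  intro m
  induction m with
  | zero =>
    intro j hj _ hjn i hi hij
    have : j = n := by omega
    subst this
    exact hytop i hi hij
  | succ m ih =>
    intro j hj hj2k hjn i hi hij
    by_cases hjn' : j = n
    · subst hjn'; exact hytop i hi hij
    · have hj1n : j + 1 ≤ n := by omega
      have hnext : ∀ i', 1 ≤ i' → i' ≤ j+1 → y i' (j+1) = ((lamF k i' : ℤ):ℝ) :=
        ih (j+1) (by omega) (by omega) (by omega)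
      -- pointwise ≤ and equal sums
      have hle : ∀ i' ∈ Finset.Icc 1 j, y i' j ≤ ((lamF k i' : ℤ):ℝ) := by
        intro i' hi'
        simp only [Finset.mem_Icc] at hi'
        have := (hyi i' j hi'.1 hi'.2 hj1n).1
        rw [hnext i' hi'.1 (by omega)] at this
        linarith [this]
      have hsum : ∑ i' ∈ Finset.Icc 1 j, y i' j = ∑ i' ∈ Finset.Icc 1 j, ((lamF k i' : ℤ):ℝ) := by
        rw [hysum j (by omega) hjn, sum_lam (by omega), ← sum_mu_top hj2k]
      have := (Finset.sum_eq_sum_iff_of_le hle).mp hsum i (Finset.mem_Icc.mpr ⟨hi, hij⟩)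
      linarith [this]

/-- tightness transfer -/
lemma tight_pair {p q u v u' v' : ℝ} (hp : 0 < p) (hq : 0 < q)
    (h1 : u ≤ u') (h2 : v ≤ v') (h : p*u + q*v = p*u' + q*v') : u = u' := by
  nlinarith

end member2

section uniq
variable {k n : ℕ}

lemma uniq (hk : 2 ≤ k) (hn : 2*k+1 ≤ n) {y z : ℕ → ℕ → ℝ} {p q : ℝ}
    (hy : GTMem n (lamF k) (muF k) y) (hz : GTMem n (lamF k) (muF k) z)
    (hp : 0 < p) (hq : 0 < q)
    (hc : ∀ i j, p * y i j + q * z i j = pat k n i j) : y = pat k n := by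
  have hk1 : 1 ≤ k := by omega
  have hk0 : (0:ℝ) < k := kR_pos hk1
  have hkR : (1:ℝ) ≤ k := by exact_mod_cast hk1
  obtain ⟨⟨hy0, hyi⟩, hyout, hytop, hysum⟩ := hy
  obtain ⟨⟨hz0, hzi⟩, hzout, hztop, hzsum⟩ := hz
  -- tightness transfer lemmas
  have tE : ∀ i j, 1 ≤ i → i ≤ j → j+1 ≤ n → pat k n i j = pat k n i (j+1) →
      y i j = y i (j+1) := by
    intro i j h1 h2 h3 he
    refine tight_pair hp hq (hyi i j h1 h2 h3).1 (hzi i j h1 h2 h3).1 ?_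
    rw [hc i j, hc i (j+1), he]
  have tD : ∀ i j, 1 ≤ i → i ≤ j → j+1 ≤ n → pat k n i j = pat k n (i+1) (j+1) →
      y (i+1) (j+1) = y i j := by
    intro i j h1 h2 h3 he
    refine tight_pair hp hq (hyi i j h1 h2 h3).2 (hzi i j h1 h2 h3).2 ?_
    rw [hc i j, hc (i+1) (j+1), he]
  have t0 : ∀ i j, IdxP n i j → pat k n i j = 0 → y i j = 0 := by
    intro i j hidx he
    have h1 := hy0 i j hidx
    have h2 := hz0 i j hidx
    have h3 := hc i j
    rw [he] at h3
    nlinarith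
  have hTop := forced_top hk hn ⟨⟨hy0, hyi⟩, hyout, hytop, hysum⟩
  -- (2) the k-prefix of the middle rows
  have hPreAux : ∀ m j, j = 2*k+1 - m → k+2 ≤ j → ∀ i, 1 ≤ i → i+k+1 ≤ j →
      y i j = (k:ℝ) := by
    intro m
    induction m with
    | zero =>
      intro j hj hj2 i hi hik
      have hj' : j = 2*k+1 := by omega
      subst hj'
      rw [hTop (2*k+1) (le_refl _) hn i hi (by omega)]
      simp only [lamF, if_pos (by omega : i ≤ k)]
      push_cast; ring
    | succ m ih =>
      intro j hj hj2 i hi hik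
      by_cases hj' : j = 2*k+1
      · subst hj'
        rw [hTop (2*k+1) (le_refl _) hn i hi (by omega)]
        simp only [lamF, if_pos (by omega : i ≤ k)]
        push_cast; ring
      · have hj2k : j ≤ 2*k := by omega
        have he : pat k n i j = pat k n i (j+1) := by
          rw [pat_mid_k ⟨hi, by omega, by omega⟩ hj2 hj2k hik]
          by_cases hj3 : j+1 ≤ 2*k
          · rw [pat_mid_k ⟨hi, by omega, by omega⟩ (by omega) hj3 (by omega)]
          · rw [pat_top_k ⟨hi, by omega, by omega⟩ (by omega) (by omega)]
        rw [tE i j hi (by omega) (by omega) he]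
        exact ih (j+1) (by omega) (by omega) i hi (by omega)
  have hPre : ∀ j, k+2 ≤ j → j ≤ 2*k+1 → ∀ i, 1 ≤ i → i+k+1 ≤ j → y i j = (k:ℝ) :=
    fun j h1 h2 => hPreAux (2*k+1-j) j (by omega) h1
  -- (3) zeros
  have hZero : ∀ i j, k+2 ≤ i → i ≤ j → j ≤ 2*k → y i j = 0 := by
    intro i j h1 h2 h3
    refine t0 i j ⟨by omega, h2, by omega⟩ ?_
    exact pat_mid_0 ⟨by omega, h2, by omega⟩ (by omega) h3 h1
  have hZkk : y (k+1) (k+1) = 0 := by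
    refine t0 (k+1) (k+1) ⟨by omega, le_refl _, by omega⟩ ?_
    rw [pat_lo_v hk1 ⟨by omega, le_refl _, by omega⟩ (le_refl _) rfl]
    push_cast; ring
  -- (4) row k+1 entries all equal, and equal to aV
  have hRowStep : ∀ i, 1 ≤ i → i ≤ k-1 → y (i+1) (k+1) = y i (k+1) := by
    intro i h1 h2
    have e1 : pat k n i k = pat k n i (k+1) := by
      rw [pat_lo_a hk1 ⟨h1, by omega, by omega⟩ (by omega) (by omega),
          pat_lo_a hk1 ⟨h1, by omega, by omega⟩ (le_refl _) (by omega)]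
    have e2 : pat k n i k = pat k n (i+1) (k+1) := by
      rw [pat_lo_a hk1 ⟨h1, by omega, by omega⟩ (by omega) (by omega),
          pat_lo_a hk1 ⟨by omega, by omega, by omega⟩ (le_refl _) (by omega)]
    rw [tD i k h1 (by omega) (by omega) e2, tE i k h1 (by omega) (by omega) e1]
  have hRowAll : ∀ i, 1 ≤ i → i ≤ k → y i (k+1) = y 1 (k+1) := by
    intro i
    induction i with
    | zero => omega
    | succ i ih =>
      intro _ h2
      by_cases h0 : i = 0
      · subst h0; rfl
      · rw [hRowStep i (by omega) (by omega), ih (by omega) (by omega)]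
  have hAval : y 1 (k+1) = aV k := by
    have hs := hysum (k+1) (by omega) (by omega)
    rw [sum_mu_mid (le_refl _) (by omega)] at hs
    rw [icc_ioc, ← Finset.sum_Ioc_consecutive _ (Nat.zero_le k) (by omega : k ≤ k+1)] at hs
    rw [sum_Ioc_const (fun i => y i (k+1)) (y 1 (k+1)) (fun i hi => by
      simp only [Finset.mem_Ioc] at hi
      exact hRowAll i (by omega) (by omega))] at hs
    rw [sum_single (fun i => y i (k+1)) rfl, hZkk] at hs
    simp only [Nat.sub_zero] at hs
    push_cast at hs
    rw [aV]
    field_simp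
    nlinarith [hs]
  have hak1 : ∀ i, 1 ≤ i → i ≤ k → y i (k+1) = aV k := by
    intro i h1 h2; rw [hRowAll i h1 h2, hAval]
  -- (5) lower a-region
  have hLoAux : ∀ m j, j = k+1-m → 1 ≤ j → ∀ i, 1 ≤ i → i+1 ≤ j → y i j = aV k := by
    intro m
    induction m with
    | zero =>
      intro j hj _ i h1 h2
      have : j = k+1 := by omega
      subst this
      exact hak1 i h1 (by omega)
    | succ m ih =>
      intro j hj hj1 i h1 h2
      by_cases hj' : j = k+1
      · subst hj'; exact hak1 i h1 (by omega)
      · have hjk : j ≤ k := by omega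
        have he : pat k n i j = pat k n i (j+1) := by
          rw [pat_lo_a hk1 ⟨h1, by omega, by omega⟩ (by omega) h2,
              pat_lo_a hk1 ⟨h1, by omega, by omega⟩ (by omega) (by omega)]
        rw [tE i j h1 (by omega) (by omega) he]
        exact ih (j+1) (by omega) (by omega) i h1 (by omega)
  have hLo : ∀ j, j ≤ k+1 → ∀ i, 1 ≤ i → i+1 ≤ j → y i j = aV k :=
    fun j h2 i h1 h3 => hLoAux (k+1-j) j (by omega) (by omega) i h1 h3
  -- (6) diagonal of lower rows
  have hDiag : ∀ j, 1 ≤ j → j ≤ k+1 → y j j = ((k:ℝ)-1)*((k:ℝ)+1-(j:ℝ))/k := by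
    intro j h1 h2
    have hs := hysum j h1 (by omega)
    rw [sum_mu_lo h2] at hs
    rw [icc_ioc, ← Finset.sum_Ioc_consecutive _ (Nat.zero_le (j-1)) (by omega : j-1 ≤ j)] at hs
    rw [sum_Ioc_const (fun i => y i j) (aV k) (fun i hi => by
      simp only [Finset.mem_Ioc] at hi
      exact hLo j h2 i (by omega) (by omega))] at hs
    rw [sum_single (fun i => y i j) (by omega : j = (j-1)+1)] at hs
    have hc1 : ((j-1-0 : ℕ):ℝ) = (j:ℝ)-1 := by
      simp only [Nat.sub_zero]; rw [Nat.cast_sub h1]; push_cast; ring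
    rw [hc1, aV] at hs
    field_simp at hs ⊢
    nlinarith [hs]
  -- (7)中 a-region
  have hMid : ∀ j, k+1 ≤ j → j ≤ 2*k → ∀ i, 1 ≤ i → j ≤ i+k → i ≤ k → y i j = aV k := by
    intro j hj1
    induction j, hj1 using Nat.le_induction with
    | base => intro _ i h1 _ h3; exact hak1 i h1 h3
    | succ j hj ih =>
      intro hj2 i h1 h2 h3
      have he : pat k n i j = pat k n i (j+1) := by
        by_cases hjk : j = k+1
        · subst hjk
          rw [pat_lo_a hk1 ⟨h1, by omega, by omega⟩ (le_refl _) (by omega),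
              pat_mid_a ⟨h1, by omega, by omega⟩ (by omega) (by omega) (by omega) h3]
        · rw [pat_mid_a ⟨h1, by omega, by omega⟩ (by omega) (by omega) (by omega) h3,
              pat_mid_a ⟨h1, by omega, by omega⟩ (by omega) (by omega) (by omega) h3]
      rw [← tE i j h1 (by omega) (by omega) he]
      exact ih (by omega) i h1 (by omega) h3
  -- (8) middle tail entries
  have hW : ∀ j, k+2 ≤ j → j ≤ 2*k → y (k+1) j = ((k:ℝ)-1)*((j:ℝ)-((k:ℝ)+1))/k := by
    intro j h1 h2
    have hs := hysum j (by omega) (by omega)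
    rw [sum_mu_mid (by omega) (by omega)] at hs
    rw [icc_ioc, split4 (fun i => y i j) (by omega : j-(k+1) ≤ k) (by omega : k ≤ k+1)
      (by omega : k+1 ≤ j)] at hs
    rw [sum_Ioc_const (fun i => y i j) ((k:ℝ)) (fun i hi => by
      simp only [Finset.mem_Ioc] at hi
      exact hPre j h1 (by omega) i (by omega) (by omega))] at hs
    rw [sum_Ioc_const (fun i => y i j) (aV k) (fun i hi => by
      simp only [Finset.mem_Ioc] at hi
      exact hMid j (by omega) h2 i (by omega) (by omega) (by omega))] at hs
    rw [sum_single (fun i => y i j) rfl] at hs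
    rw [sum_Ioc_const (fun i => y i j) 0 (fun i hi => by
      simp only [Finset.mem_Ioc] at hi
      exact hZero i j (by omega) (by omega) h2)] at hs
    have hc1 : ((j-(k+1)-0 : ℕ):ℝ) = (j:ℝ)-((k:ℝ)+1) := by
      simp only [Nat.sub_zero]; rw [Nat.cast_sub (by omega)]; push_cast; ring
    have hc2 : ((k-(j-(k+1)) : ℕ):ℝ) = (k:ℝ)-((j:ℝ)-((k:ℝ)+1)) := by
      rw [Nat.cast_sub (by omega), Nat.cast_sub (by omega)]; push_cast; ring
    rw [hc1, hc2, aV] at hs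
    field_simp at hs ⊢
    nlinarith [hs]
  -- conclusion
  funext i j
  by_cases hidx : IdxP n i j
  · obtain ⟨h1, h2, h3⟩ := hidx
    by_cases hj1 : 2*k+1 ≤ j
    · rw [hTop j hj1 h3 i h1 h2]
      rcases (by omega : i ≤ k ∨ i = k+1 ∨ k+2 ≤ i) with hcase | hcase | hcase
      · rw [pat_top_k ⟨h1, h2, h3⟩ hj1 hcase]; simp [lamF, hcase]
      · rw [pat_top_e ⟨h1, h2, h3⟩ hj1 hcase]
        simp only [lamF, if_neg (by omega : ¬ i ≤ k), if_pos hcase]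
        push_cast; ring
      · rw [pat_top_0 ⟨h1, h2, h3⟩ hj1 hcase]
        simp only [lamF, if_neg (by omega : ¬ i ≤ k), if_neg (by omega : ¬ i = k+1)]
        norm_num
    · by_cases hj2 : j ≤ k+1
      · rcases (by omega : i + 1 ≤ j ∨ i = j) with hcase | hcase
        · rw [pat_lo_a hk1 ⟨h1, h2, h3⟩ hj2 hcase, hLo j hj2 i h1 hcase]
        · subst hcase
          rw [pat_lo_v hk1 ⟨h1, h2, h3⟩ hj2 rfl, hDiag i h1 hj2]
      · have hm1 : k+2 ≤ j := by omega
        have hm2 : j ≤ 2*k := by omega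
        rcases (by omega : i+k+1 ≤ j ∨ (j ≤ i+k ∧ i ≤ k) ∨ i = k+1 ∨ k+2 ≤ i)
          with hcase | hcase | hcase | hcase
        · rw [pat_mid_k ⟨h1, h2, h3⟩ hm1 hm2 hcase, hPre j hm1 (by omega) i h1 hcase]
        · rw [pat_mid_a ⟨h1, h2, h3⟩ hm1 hm2 hcase.1 hcase.2,
              hMid j (by omega) hm2 i h1 hcase.1 hcase.2]
        · subst hcase
          rw [pat_mid_w ⟨h1, h2, h3⟩ hm1 hm2 rfl, hW j hm1 hm2]
        · rw [pat_mid_0 ⟨h1, h2, h3⟩ hm1 hm2 hcase, hZero i j hcase h2 hm2]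
  · rw [pat_out hidx, hyout i j hidx]

end uniq

section extreme
variable {k n : ℕ}

lemma pat_extreme (hk : 2 ≤ k) (hn : 2*k+1 ≤ n) :
    pat k n ∈ Set.extremePoints ℝ {y | GTMem n (lamF k) (muF k) y} := by
  rw [mem_extremePoints]
  refine ⟨pat_mem hk hn, ?_⟩
  intro y hy z hz hseg
  obtain ⟨p, q, hp, hq, hpq, hsum⟩ := hseg
  have hc : ∀ i j, p * y i j + q * z i j = pat k n i j := by
    intro i j
    have := congrFun (congrFun hsum i) j
    simpa [Pi.add_apply, Pi.smul_apply, smul_eq_mul] using this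
  have hc' : ∀ i j, q * z i j + p * y i j = pat k n i j := fun i j => by linarith [hc i j]
  exact ⟨uniq hk hn hy hz hp hq hc, uniq hk hn hz hy hq hp hc'⟩


lemma coprime_k {k : ℕ} (hk : 2 ≤ k) : ((k:ℤ)^2 - 1).natAbs.Coprime k := by
  have h2 : 1 ≤ k^2 := by nlinarith
  have h1 : ((k:ℤ)^2 - 1).natAbs = k^2 - 1 := by
    rw [show (k:ℤ)^2 - 1 = ((k^2 - 1 : ℕ):ℤ) by rw [Nat.cast_sub h2]; push_cast; ring]
    exact Int.natAbs_natCast _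
  rw [h1]
  have h4 : k^2 - 1 = k*(k-1) + (k-1) := by
    zify [h2, show 1 ≤ k by omega]; ring
  rw [h4, Nat.coprime_mul_left_add_left]
  exact (Nat.coprime_self_sub_left (show 1 ≤ k by omega)).mpr (Nat.coprime_one_left k)

end extreme
end GTV


/-- For every `k ≥ 2` there is a GT-polytope in `X_{2k+1}` with a vertex having a coordinate of
denominator exactly `k`; in particular for every `n ≥ 5` there is a GT-polytope in `Xₙ` with a
non-integral vertex, disproving the Berenstein--Kirillov conjecture. -/
theorem stmt16 :
    (∀ k : ℕ, 2 ≤ k → ∃ (lam mu : ℕ → ℤ) (x : ℕ → ℕ → ℝ),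
      x ∈ Set.extremePoints ℝ {y | GTMem (2 * k + 1) lam mu y} ∧
      ∃ (i j : ℕ) (r : ℚ), IdxP (2 * k + 1) i j ∧ x i j = (r : ℝ) ∧ r.den = k) ∧
    (∀ n : ℕ, 5 ≤ n → ∃ (lam mu : ℕ → ℤ) (x : ℕ → ℕ → ℝ),
      x ∈ Set.extremePoints ℝ {y | GTMem n lam mu y} ∧
      ∃ i j : ℕ, IdxP n i j ∧ ¬ ∃ m : ℤ, x i j = (m : ℝ)) := by
  constructor
  · intro k hk
    refine ⟨GTV.lamF k, GTV.muF k, GTV.pat k (2*k+1),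
      GTV.pat_extreme hk (le_refl _), 1, k+1,
      Rat.mk' ((k:ℤ)^2-1) k (by omega) (GTV.coprime_k hk),
      ⟨le_refl 1, by omega, by omega⟩, ?_, rfl⟩
    rw [GTV.pat_lo_a (by omega) ⟨le_refl 1, by omega, by omega⟩ (le_refl _) (by omega), GTV.aV]
    rw [Rat.cast_def]
    push_cast
    norm_num
  · intro n hn
    refine ⟨GTV.lamF 2, GTV.muF 2, GTV.pat 2 n,
      GTV.pat_extreme (le_refl 2) (by omega), 1, 3, ⟨le_refl 1, by omega, by omega⟩, ?_⟩
    rintro ⟨m, hm⟩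
    rw [GTV.pat_lo_a (by omega) ⟨le_refl 1, by omega, by omega⟩ (by omega) (by omega),
        GTV.aV] at hm
    norm_num at hm
    have h2 : (2:ℝ) * m = 3 := by linarith
    have h3 : (2*m : ℤ) = 3 := by exact_mod_cast h2
    omega
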